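/- Let g : [0,T] → C be continuous with g(0) = 0, let μ be a finite complex measure on [0,T], and set f_n(t) = ∫_{[0,t]} n e^{−n(t−s)} μ(ds). Then for each t ∈ [0,T], ∫₀ᵗ g(t−s) f_n(s) ds converges as n → ∞ to ∫_{[0,t]} g(t−s) μ(ds). -/

import Mathlib

open MeasureTheory Filter Topology

lemma exp_kernel_integral (n : ℕ) (u v : ℝ) :
    (∫ s in u..v, (n : ℝ) * Real.exp (-(n:ℝ) * (s - u))) = 1 - Real.exp (-(n:ℝ) * (v - u)) := by
  have hd : ∀ s : ℝ, HasDerivAt (fun s => -Real.exp (-(n:ℝ) * (s - u)))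
      ((n : ℝ) * Real.exp (-(n:ℝ) * (s - u))) s := by
    intro s
    have h1 : HasDerivAt (fun s : ℝ => -(n:ℝ) * (s - u)) (-(n:ℝ)) s := by
      simpa using ((hasDerivAt_id s).sub_const u).const_mul (-(n:ℝ))
    have h2 : HasDerivAt (fun s => -Real.exp (-(n:ℝ) * (s - u)))
        (-(Real.exp (-(n:ℝ) * (s - u)) * -(n:ℝ))) s := h1.exp.neg
    convert h2 using 1
    ring
  rw [intervalIntegral.integral_eq_sub_of_hasDerivAt (fun s _ => hd s)
    ((by fun_prop : Continuous fun s : ℝ => (n : ℝ) * Real.exp (-(n:ℝ) * (s - u))).intervalIntegrable u v)]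
  simp
  ring

lemma n_exp_tendsto (δ : ℝ) (hδ : 0 < δ) :
    Tendsto (fun n : ℕ => (n : ℝ) * Real.exp (-(n:ℝ) * δ)) atTop (𝓝 0) := by
  have A : Tendsto (fun x : ℝ => δ⁻¹ * (x ^ 1 * Real.exp (-x))) atTop (𝓝 (δ⁻¹ * 0)) :=
    (Real.tendsto_pow_mul_exp_neg_atTop_nhds_zero 1).const_mul _
  have B : Tendsto (fun n : ℕ => (n : ℝ) * δ) atTop atTop :=
    tendsto_natCast_atTop_atTop.atTop_mul_const hδ
  have C := A.comp B
  rw [mul_zero] at C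
  refine C.congr fun n => ?_
  simp only [Function.comp_apply, pow_one]
  field_simp

lemma aux_tendsto (t : ℝ) (ht : 0 ≤ t) (g : ℝ → ℂ) (hg : Continuous g) (hg0 : g 0 = 0)
    (M : ℝ) (hM : ∀ x, ‖g x‖ ≤ M)
    (ν : Measure ℝ) [IsFiniteMeasure ν]
    (w : ℝ → ℂ) (hw : Measurable w) (hw1 : ∀ x, ‖w x‖ = 1) :
    Tendsto (fun n : ℕ => ∫ s in (0:ℝ)..t,
        g (t - s) * ∫ u in Set.Icc 0 s, ((n : ℝ) * Real.exp (-(n:ℝ) * (s - u))) • w u ∂ν)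
      atTop (𝓝 (∫ u in Set.Icc 0 t, g (t - u) * w u ∂ν)) := by
  have hM0 : 0 ≤ M := le_trans (norm_nonneg _) (hM 0)
  set c : ℕ → ℝ → ℝ → ℝ := fun n s u => (n:ℝ) * Real.exp (-(n:ℝ) * (s - u)) with hc
  set J : ℕ → ℝ → ℂ := fun n u => ∫ s in u..t, (c n s u) • g (t - s) with hJ
  have hcnn : ∀ n s u, 0 ≤ c n s u := fun n s u =>
    mul_nonneg (Nat.cast_nonneg n) (Real.exp_pos _).le
  have hccont : ∀ (n : ℕ) (u : ℝ), Continuous (fun s => c n s u) := by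
    intro n u; fun_prop
  -- continuity of J n
  have hJcont : ∀ n, Continuous (J n) := by
    intro n
    have e : J n = fun u => Real.exp ((n:ℝ) * u) •
        ∫ s in u..t, ((n:ℝ) * Real.exp (-(n:ℝ) * s)) • g (t - s) := by
      funext u
      rw [← intervalIntegral.integral_smul]
      apply intervalIntegral.integral_congr
      intro s _
      show c n s u • g (t - s) = Real.exp ((n:ℝ) * u) • ((n:ℝ) * Real.exp (-(n:ℝ) * s)) • g (t - s)
      rw [smul_smul]
      congr 1
      rw [hc]
      simp only []
      rw [show -(n:ℝ) * (s - u) = (n:ℝ) * u + -(n:ℝ) * s by ring, Real.exp_add]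
      ring
    rw [e]
    have hint : Continuous fun u : ℝ => ∫ s in u..t, ((n:ℝ) * Real.exp (-(n:ℝ) * s)) • g (t - s) := by
      have hco : Continuous fun s : ℝ => ((n:ℝ) * Real.exp (-(n:ℝ) * s)) • g (t - s) := by
        fun_prop
      have := (intervalIntegral.continuous_primitive (μ := volume)
        (fun a b => hco.intervalIntegrable a b) t)
      have h2 : (fun u : ℝ => ∫ s in u..t, ((n:ℝ) * Real.exp (-(n:ℝ) * s)) • g (t - s))
          = fun u => -∫ s in t..u, ((n:ℝ) * Real.exp (-(n:ℝ) * s)) • g (t - s) := by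
        funext u; rw [intervalIntegral.integral_symm]
      rw [h2]
      exact this.neg
    exact (Real.continuous_exp.comp (continuous_const.mul continuous_id)).smul hint
  -- bound on J
  have hJbound : ∀ (n : ℕ) (u : ℝ), u ≤ t → ‖J n u‖ ≤ M := by
    intro n u hut
    have hgc : Continuous fun s : ℝ => g (t - s) := hg.comp (continuous_const.sub continuous_id)
    have h1 : ‖J n u‖ ≤ ∫ s in u..t, ‖(c n s u) • g (t - s)‖ :=
      intervalIntegral.norm_integral_le_integral_norm hut
    have h2 : (∫ s in u..t, ‖(c n s u) • g (t - s)‖) ≤ ∫ s in u..t, (c n s u) * M := by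
      apply intervalIntegral.integral_mono_on hut
      · exact (((hccont n u).smul hgc).norm).intervalIntegrable u t
      · exact ((hccont n u).mul continuous_const).intervalIntegrable u t
      · intro x _
        rw [norm_smul, Real.norm_of_nonneg (hcnn n x u)]
        exact mul_le_mul_of_nonneg_left (hM _) (hcnn n x u)
    have h3 : (∫ s in u..t, (c n s u) * M) = (1 - Real.exp (-(n:ℝ) * (t - u))) * M := by
      rw [intervalIntegral.integral_mul_const, hc]
      simp only []
      rw [exp_kernel_integral]
    have h4 : (1 - Real.exp (-(n:ℝ) * (t - u))) * M ≤ 1 * M := by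
      apply mul_le_mul_of_nonneg_right _ hM0
      have := (Real.exp_pos (-(n:ℝ) * (t - u))).le
      linarith
    calc ‖J n u‖ ≤ _ := h1
      _ ≤ _ := h2
      _ = _ := h3
      _ ≤ 1 * M := h4
      _ = M := one_mul M
  -- pointwise limit
  have hJlim : ∀ u ∈ Set.Icc (0:ℝ) t, Tendsto (fun n => J n u) atTop (𝓝 (g (t - u))) := by
    intro u hu
    rcases eq_or_lt_of_le hu.2 with h | h
    · subst h
      simp only [hJ, intervalIntegral.integral_same, sub_self, hg0]
      exact tendsto_const_nhds
    · have htu : 0 < t - u := sub_pos.2 h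
      have hgc : Continuous fun s : ℝ => g (t - s) := hg.comp (continuous_const.sub continuous_id)
      have hiφ : Tendsto (fun n : ℕ => ∫ x in Set.Icc u t, c n x u ∂volume) atTop (𝓝 1) := by
        have e1 : ∀ n : ℕ, (∫ x in Set.Icc u t, c n x u ∂volume)
            = 1 - Real.exp (-(n:ℝ) * (t - u)) := by
          intro n
          rw [← setIntegral_congr_set Ioc_ae_eq_Icc,
            ← intervalIntegral.integral_of_le h.le]
          exact exp_kernel_integral n u t
        simp_rw [e1]
        have : Tendsto (fun n : ℕ => Real.exp (-(n:ℝ) * (t - u))) atTop (𝓝 0) := by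
          have B : Tendsto (fun n : ℕ => (n:ℝ) * (t - u)) atTop atTop :=
            tendsto_natCast_atTop_atTop.atTop_mul_const htu
          have := Real.tendsto_exp_neg_atTop_nhds_zero.comp B
          refine this.congr fun n => ?_
          simp [Function.comp, neg_mul]
        have := tendsto_const_nhds (x := (1:ℝ)) (f := atTop (α := ℕ)) |>.sub this
        simpa using this
      have hlφ : ∀ U : Set ℝ, IsOpen U → u ∈ U →
          TendstoUniformlyOn (fun n x => c n x u) 0 atTop (Set.Icc u t \ U) := by
        intro U hU hUu
        obtain ⟨δ, δpos, hδ⟩ := Metric.isOpen_iff.1 hU u hUu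
        rw [Metric.tendstoUniformlyOn_iff]
        intro ε εpos
        have hlim := n_exp_tendsto δ δpos
        filter_upwards [(Metric.tendsto_nhds.1 hlim) ε εpos] with n hn x hx
        have hxu : δ ≤ x - u := by
          by_contra hcon
          push_neg at hcon
          exact hx.2 (hδ (by
            rw [Metric.mem_ball, Real.dist_eq, abs_of_nonneg (sub_nonneg.2 hx.1.1)]
            exact hcon))
        have hle : c n x u ≤ (n:ℝ) * Real.exp (-(n:ℝ) * δ) := by
          apply mul_le_mul_of_nonneg_left _ (Nat.cast_nonneg n)
          apply Real.exp_le_exp.2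
          have : (n:ℝ) * δ ≤ (n:ℝ) * (x - u) :=
            mul_le_mul_of_nonneg_left hxu (Nat.cast_nonneg n)
          linarith
        rw [Pi.zero_apply, Real.dist_eq]
        rw [Real.dist_eq, sub_zero, abs_of_nonneg (mul_nonneg (Nat.cast_nonneg n) (Real.exp_pos _).le)] at hn
        rw [zero_sub, abs_neg, abs_of_nonneg (hcnn n x u)]
        exact lt_of_le_of_lt hle hn
      have peak := tendsto_setIntegral_peak_smul_of_integrableOn_of_tendsto
        (μ := volume) (s := Set.Icc u t) (t := Set.Icc u t) (x₀ := u) (l := atTop)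
        (φ := fun n x => c n x u) (g := fun s => g (t - s)) (a := g (t - u))
        measurableSet_Icc measurableSet_Icc subset_rfl self_mem_nhdsWithin
        (by rw [Real.volume_Icc]; exact ENNReal.ofReal_ne_top)
        (Eventually.of_forall fun n x _ => hcnn n x u)
        hlφ hiφ
        (Eventually.of_forall fun n => ((hccont n u).aestronglyMeasurable))
        (hgc.continuousOn.integrableOn_compact isCompact_Icc)
        (hgc.continuousAt.continuousWithinAt.tendsto)
      refine peak.congr fun n => ?_
      rw [hJ]
      simp only []
      rw [intervalIntegral.integral_of_le h.le, setIntegral_congr_set Ioc_ae_eq_Icc]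
  -- Fubini
  haveI : IsFiniteMeasure (volume.restrict (Set.Ioc (0:ℝ) t)) := by
    constructor
    rw [Measure.restrict_apply_univ, Real.volume_Ioc]
    exact ENNReal.ofReal_lt_top
  have key : ∀ n : ℕ,
      (∫ s in (0:ℝ)..t, g (t - s) * ∫ u in Set.Icc 0 s, (c n s u) • w u ∂ν)
        = ∫ u in Set.Icc 0 t, J n u * w u ∂ν := by
    intro n
    rw [intervalIntegral.integral_of_le ht]
    have h1 : ∀ s : ℝ, (∫ u in Set.Icc 0 s, (c n s u) • w u ∂ν)
        = ∫ u, Set.indicator (Set.Icc 0 s) (fun u => (c n s u) • w u) u ∂ν :=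
      fun s => (integral_indicator measurableSet_Icc).symm
    simp_rw [h1, ← integral_const_mul]
    -- integrability on the product
    have hA : MeasurableSet {p : ℝ × ℝ | 0 ≤ p.2 ∧ p.2 ≤ p.1} := by
      apply MeasurableSet.inter
      · exact measurableSet_le measurable_const measurable_snd
      · exact measurableSet_le measurable_snd measurable_fst
    have heq : (Function.uncurry fun s u =>
          g (t - s) * Set.indicator (Set.Icc 0 s) (fun v => (c n s v) • w v) u)
        = fun p : ℝ × ℝ => Set.indicator {p : ℝ × ℝ | 0 ≤ p.2 ∧ p.2 ≤ p.1}
            (fun p => g (t - p.1) * ((c n p.1 p.2) • w p.2)) p := by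
      funext p
      rcases p with ⟨s, u⟩
      by_cases hp : 0 ≤ u ∧ u ≤ s
      · have hpm : ((s, u) : ℝ × ℝ) ∈ {p : ℝ × ℝ | 0 ≤ p.2 ∧ p.2 ≤ p.1} := hp
        rw [Set.indicator_of_mem hpm]
        show g (t - s) * (Set.Icc 0 s).indicator (fun v => c n s v • w v) u = _
        rw [Set.indicator_of_mem (Set.mem_Icc.2 hp)]
      · have hpn : ((s, u) : ℝ × ℝ) ∉ {p : ℝ × ℝ | 0 ≤ p.2 ∧ p.2 ≤ p.1} := hp
        rw [Set.indicator_of_notMem hpn]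
        show g (t - s) * (Set.Icc 0 s).indicator (fun v => c n s v • w v) u = 0
        rw [Set.indicator_of_notMem (fun hmem => hp (Set.mem_Icc.1 hmem)), mul_zero]
    have hmeas : AEStronglyMeasurable
        (Function.uncurry fun s u =>
          g (t - s) * Set.indicator (Set.Icc 0 s) (fun v => (c n s v) • w v) u)
        ((volume.restrict (Set.Ioc (0:ℝ) t)).prod ν) := by
      rw [heq]
      apply Measurable.aestronglyMeasurable
      apply Measurable.indicator _ hA
      apply Measurable.mul
      · exact (hg.measurable.comp (measurable_const.sub measurable_fst))
      · apply Measurable.fun_smul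
        · exact ((continuous_const.mul ((continuous_const.mul
            (continuous_fst.sub continuous_snd)).rexp)).measurable :
            Measurable fun p : ℝ × ℝ => (n:ℝ) * Real.exp (-(n:ℝ) * (p.1 - p.2)))
        · exact hw.comp measurable_snd
    have hInt : Integrable
        (Function.uncurry fun s u =>
          g (t - s) * Set.indicator (Set.Icc 0 s) (fun v => (c n s v) • w v) u)
        ((volume.restrict (Set.Ioc (0:ℝ) t)).prod ν) := by
      apply Integrable.mono' (integrable_const (M * n)) hmeas
      apply Eventually.of_forall
      intro p
      rw [heq]
      beta_reduce
      by_cases hp : 0 ≤ p.2 ∧ p.2 ≤ p.1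
      · have hpm : p ∈ {p : ℝ × ℝ | 0 ≤ p.2 ∧ p.2 ≤ p.1} := hp
        rw [Set.indicator_of_mem hpm]
        rw [norm_mul, norm_smul, Real.norm_of_nonneg (hcnn n p.1 p.2), hw1, mul_one]
        have hc1 : c n p.1 p.2 ≤ (n:ℝ) := by
          rw [hc]
          simp only []
          calc (n:ℝ) * Real.exp (-(n:ℝ) * (p.1 - p.2)) ≤ (n:ℝ) * 1 := by
                apply mul_le_mul_of_nonneg_left _ (Nat.cast_nonneg n)
                rw [Real.exp_le_one_iff]
                have : (0:ℝ) ≤ (n:ℝ) * (p.1 - p.2) :=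
                  mul_nonneg (Nat.cast_nonneg n) (sub_nonneg.2 hp.2)
                linarith
            _ = (n:ℝ) := mul_one _
        exact mul_le_mul (hM _) hc1 (hcnn n p.1 p.2) hM0
      · have hpn : p ∉ {p : ℝ × ℝ | 0 ≤ p.2 ∧ p.2 ≤ p.1} := hp
        rw [Set.indicator_of_notMem hpn, norm_zero]
        positivity
    rw [integral_integral_swap hInt]
    -- compute the inner integral
    have inner : ∀ u : ℝ,
        (∫ s in Set.Ioc (0:ℝ) t,
          g (t - s) * Set.indicator (Set.Icc 0 s) (fun v => (c n s v) • w v) u ∂volume)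
        = Set.indicator (Set.Icc 0 t) (fun u => J n u * w u) u := by
      intro u
      by_cases hu : u ∈ Set.Icc (0:ℝ) t
      · rw [Set.indicator_of_mem hu]
        have e1 : ∀ s : ℝ,
            g (t - s) * Set.indicator (Set.Icc 0 s) (fun v => (c n s v) • w v) u
            = Set.indicator (Set.Ici u) (fun s => (c n s u) • g (t - s) * w u) s := by
          intro s
          by_cases hs : u ≤ s
          · rw [Set.indicator_of_mem (Set.mem_Icc.2 ⟨hu.1, hs⟩),
              Set.indicator_of_mem (Set.mem_Ici.2 hs)]
            show g (t - s) * (c n s u • w u) = c n s u • g (t - s) * w u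
            rw [mul_smul_comm, smul_mul_assoc]
          · rw [Set.indicator_of_notMem (fun hmem => hs (Set.mem_Icc.1 hmem).2),
              Set.indicator_of_notMem (fun hmem => hs (Set.mem_Ici.1 hmem)), mul_zero]
        simp_rw [e1]
        rw [integral_indicator measurableSet_Ici, Measure.restrict_restrict measurableSet_Ici]
        have hae : ((Set.Ici u ∩ Set.Ioc (0:ℝ) t : Set ℝ)) =ᵐ[volume] (Set.Ioc u t : Set ℝ) := by
          apply MeasureTheory.ae_eq_set.2
          constructor
          · refine measure_mono_null ?_ (measure_singleton u)
            · intro x hx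
              simp only [Set.mem_diff, Set.mem_inter_iff, Set.mem_Ici, Set.mem_Ioc,
                Set.mem_singleton_iff, not_and, not_lt] at hx ⊢
              rcases hx with ⟨⟨hux, _, hxt⟩, hni⟩
              by_contra hne
              rcases lt_or_eq_of_le hux with h' | h'
              · exact absurd (hni h') (by simp [hxt])
              · exact hne h'.symm
          · refine measure_mono_null ?_ (measure_empty (μ := volume))
            · intro x hx
              simp only [Set.mem_diff, Set.mem_inter_iff, Set.mem_Ici, Set.mem_Ioc] at hx
              rcases hx with ⟨⟨hux, hxt⟩, hni⟩
              exact absurd ⟨hux.le, lt_of_le_of_lt hu.1 hux, hxt⟩ hni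
        rw [setIntegral_congr_set hae,
          ← intervalIntegral.integral_of_le hu.2, intervalIntegral.integral_mul_const]
      · rw [Set.indicator_of_notMem hu]
        rw [setIntegral_congr_fun measurableSet_Ioc (g := fun _ => (0:ℂ)) ?_, integral_zero]
        intro s hs
        have hnm : u ∉ Set.Icc 0 s := fun hmem =>
          hu (Set.mem_Icc.2 ⟨(Set.mem_Icc.1 hmem).1, le_trans (Set.mem_Icc.1 hmem).2 hs.2⟩)
        show g (t - s) * (Set.Icc 0 s).indicator (fun v => c n s v • w v) u = 0
        rw [Set.indicator_of_notMem hnm, mul_zero]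
    simp_rw [inner]
    rw [integral_indicator measurableSet_Icc]
  -- dominated convergence
  rw [show (fun n : ℕ => ∫ s in (0:ℝ)..t,
      g (t - s) * ∫ u in Set.Icc 0 s, (c n s u) • w u ∂ν)
      = fun n : ℕ => ∫ u in Set.Icc 0 t, J n u * w u ∂ν from funext key]
  apply tendsto_integral_of_dominated_convergence (fun _ => M)
  · intro n
    exact ((hJcont n).measurable.mul hw).aestronglyMeasurable
  · exact integrable_const M
  · intro n
    filter_upwards [ae_restrict_mem measurableSet_Icc] with u hu
    rw [norm_mul, hw1, mul_one]
    exact hJbound n u hu.2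
  · filter_upwards [ae_restrict_mem measurableSet_Icc] with u hu
    exact (hJlim u hu).mul_const (w u)

/-- Let `g : [0,T] → ℂ` be continuous with `g(0) = 0`, and let `μ` be a finite complex
measure on `[0,T]`, represented via its polar decomposition `dμ = w d|μ|` with `ν = |μ|`
a finite measure supported on `[0,T]` and `w` a measurable unimodular density.  Setting
`f_n(t) = ∫_{[0,t]} n e^{-n(t-s)} μ(ds)`, for each `t ∈ [0,T]` one has
`∫₀ᵗ g(t-s) f_n(s) ds → ∫_{[0,t]} g(t-s) μ(ds)` as `n → ∞`. -/
theorem mollified_measure_convolution_tendsto (T : ℝ) (hT : 0 < T)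
    (g : ℝ → ℂ) (hg : ContinuousOn g (Set.Icc 0 T)) (hg0 : g 0 = 0)
    (ν : Measure ℝ) [IsFiniteMeasure ν] (hsupp : ν (Set.Icc 0 T)ᶜ = 0)
    (w : ℝ → ℂ) (hw : Measurable w) (hw1 : ∀ x, ‖w x‖ = 1)
    (fn : ℕ → ℝ → ℂ)
    (hfn : fn = fun (n : ℕ) (t : ℝ) =>
      ∫ s in Set.Icc 0 t, ((n : ℝ) * Real.exp (-(n : ℝ) * (t - s)) : ℝ) • w s ∂ν) :
    ∀ t ∈ Set.Icc (0:ℝ) T,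
      Tendsto (fun n : ℕ => ∫ s in (0:ℝ)..t, g (t - s) * fn n s) atTop
        (nhds (∫ s in Set.Icc 0 t, g (t - s) * w s ∂ν)) := by
  intro t ht
  obtain ⟨ht0, htT⟩ := ht
  subst hfn
  set q : ℝ → ℝ := fun x => min T (max 0 x) with hq
  have hqmem : ∀ x, q x ∈ Set.Icc (0:ℝ) T := fun x =>
    ⟨le_min hT.le (le_max_left 0 x), min_le_left _ _⟩
  have hqid : ∀ x ∈ Set.Icc (0:ℝ) T, q x = x := by
    intro x hx
    rw [hq]
    simp only []
    rw [max_eq_right hx.1, min_eq_right hx.2]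
  set G : ℝ → ℂ := fun x => g (q x) with hG
  have hGc : Continuous G := hg.comp_continuous (by fun_prop) hqmem
  have hGeq : ∀ x ∈ Set.Icc (0:ℝ) T, G x = g x := by
    intro x hx
    rw [hG]
    simp only []
    rw [hqid x hx]
  have hG0 : G 0 = 0 := by rw [hGeq 0 ⟨le_refl 0, hT.le⟩, hg0]
  obtain ⟨C, hC⟩ := isCompact_Icc.exists_bound_of_continuousOn hg
  have hMG : ∀ x, ‖G x‖ ≤ C := fun x => hC _ (hqmem x)
  have main := aux_tendsto t ht0 G hGc hG0 C hMG ν w hw hw1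
  have e2 : (∫ u in Set.Icc 0 t, G (t - u) * w u ∂ν)
      = ∫ u in Set.Icc 0 t, g (t - u) * w u ∂ν := by
    apply setIntegral_congr_fun measurableSet_Icc
    intro u hu
    simp only []
    rw [hGeq (t - u) ⟨sub_nonneg.2 hu.2, le_trans (sub_le_self t hu.1) htT⟩]
  have e1 : ∀ n : ℕ, (∫ s in (0:ℝ)..t,
        G (t - s) * ∫ u in Set.Icc 0 s, ((n:ℝ) * Real.exp (-(n:ℝ) * (s - u))) • w u ∂ν)
      = ∫ s in (0:ℝ)..t,
        g (t - s) * ∫ u in Set.Icc 0 s, ((n:ℝ) * Real.exp (-(n:ℝ) * (s - u))) • w u ∂ν := by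
    intro n
    apply intervalIntegral.integral_congr
    intro s hs
    rw [Set.uIcc_of_le ht0] at hs
    simp only []
    rw [hGeq (t - s) ⟨sub_nonneg.2 hs.2, le_trans (sub_le_self t hs.1) htT⟩]
  rw [e2] at main
  exact main.congr fun n => e1 n
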